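/- If additionally liminf_{n→∞} a_n = ∞ (where a_n are the continued fraction partial quotients of α), then for the constructed θ one has lim_{j→∞} k_j/q_{2j-1} = η, and consequently δ(α,θ) = β(α)/η exactly. -/

import Mathlib

/-- Distance from a real number to the nearest integer, ‖x‖_{ℝ/ℤ}. -/
noncomputable def normZ (x : ℝ) : ℝ := |x - round x|

/-- The Gauss map. -/
noncomputable def cfGauss (x : ℝ) : ℝ := Int.fract x⁻¹

/-- Partial quotients of α ∈ (0,1): `cfA α n` is the paper's a_{n+1}. -/
noncomputable def cfA (α : ℝ) (n : ℕ) : ℤ := ⌊(cfGauss^[n] α)⁻¹⌋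

/-- Continued fraction denominators: q_0 = 1, q_1 = a_1, q_{n+2} = a_{n+2} q_{n+1} + q_n. -/
noncomputable def cfQ (α : ℝ) : ℕ → ℤ
  | 0 => 1
  | 1 => cfA α 0
  | (n + 2) => cfA α (n + 1) * cfQ α (n + 1) + cfQ α n

/-- Continued fraction numerators: p_0 = 0, p_1 = 1, p_{n+2} = a_{n+2} p_{n+1} + p_n. -/
noncomputable def cfP (α : ℝ) : ℕ → ℤ
  | 0 => 0
  | 1 => 1
  | (n + 2) => cfA α (n + 1) * cfP α (n + 1) + cfP α n

open Filter

lemma gauss_iter (α : ℝ) (hα : Irrational α) (h0 : 0 < α) (h1 : α < 1) :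
    ∀ n, Irrational (cfGauss^[n] α) ∧ 0 < cfGauss^[n] α ∧ cfGauss^[n] α < 1 := by
  intro n
  induction n with
  | zero => exact ⟨hα, h0, h1⟩
  | succ n ih =>
    obtain ⟨hirr, hpos, hlt⟩ := ih
    rw [Function.iterate_succ_apply']
    set x := cfGauss^[n] α
    have hinv : Irrational x⁻¹ := hirr.inv
    have hfr : Irrational (cfGauss x) := by
      unfold cfGauss Int.fract
      exact hinv.sub_intCast _
    refine ⟨hfr, ?_, ?_⟩
    · rcases lt_or_eq_of_le (Int.fract_nonneg x⁻¹) with h | h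
      · exact h
      · exact absurd (show cfGauss x ∈ Set.range ((↑) : ℚ → ℝ) from
          ⟨0, by simp [cfGauss, ← h]⟩) hfr
    · exact Int.fract_lt_one _

lemma cfA_ge_one (α : ℝ) (hα : Irrational α) (h0 : 0 < α) (h1 : α < 1) (n : ℕ) :
    1 ≤ cfA α n := by
  obtain ⟨_, hpos, hlt⟩ := gauss_iter α hα h0 h1 n
  have h2 : 1 < (cfGauss^[n] α)⁻¹ := (one_lt_inv₀ hpos).mpr hlt
  exact Int.le_floor.mpr (by exact_mod_cast h2.le)

lemma cfQ_ge_one (α : ℝ) (hα : Irrational α) (h0 : 0 < α) (h1 : α < 1) :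
    ∀ n, 1 ≤ cfQ α n ∧ 1 ≤ cfQ α (n + 1) := by
  intro n
  induction n with
  | zero =>
    refine ⟨le_refl _, ?_⟩
    show (1 : ℤ) ≤ cfA α 0
    exact cfA_ge_one α hα h0 h1 0
  | succ n ih =>
    refine ⟨ih.2, ?_⟩
    show 1 ≤ cfA α (n + 1) * cfQ α (n + 1) + cfQ α n
    nlinarith [cfA_ge_one α hα h0 h1 (n + 1), ih.1, ih.2]

/-- if a_n → ∞ then k_j/q_{2j-1} → η and δ(α,θ) = β(α)/η. -/
theorem stmt13 (α η : ℝ) (hα : Irrational α) (h0 : 0 < α) (h1 : α < 1)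
    (hη0 : 0 < η) (hη1 : η ≤ 1 / 100)
    (ha : Filter.Tendsto (fun n : ℕ => (cfA α n : ℝ)) Filter.atTop Filter.atTop)
    (β : ℝ)
    (hβdef : β = Filter.limsup (fun n : ℕ => Real.log (cfQ α (n + 1)) / (cfQ α n : ℝ)) Filter.atTop)
    (hβ0 : 0 < β)
    (hβeven : Filter.limsup
        (fun j : ℕ => Real.log (cfQ α (2 * j)) / (cfQ α (2 * j - 1) : ℝ)) Filter.atTop = β)
    (j₀ : ℕ) (k : ℕ → ℤ)
    (hkrec : ∀ j, j₀ ≤ j →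
      k (j + 1) = k j + ⌊η * (cfQ α (2 * j + 1) : ℝ) / (cfQ α (2 * j) : ℝ)⌋ * cfQ α (2 * j))
    (hkbound : ∀ j, 1 ≤ j →
      |(k j : ℝ) - η * (cfQ α (2 * j - 1) : ℝ)| ≤ 100 * (cfQ α (2 * j - 2) : ℝ))
    (δ : ℝ)
    (hδdef : δ = Filter.limsup (fun j : ℕ => Real.log (cfQ α (2 * j)) / (k j : ℝ)) Filter.atTop) :
    Filter.Tendsto (fun j : ℕ => (k j : ℝ) / (cfQ α (2 * j - 1) : ℝ)) Filter.atTop (nhds η)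
    ∧ δ = β / η := by
  have hqR : ∀ n, (1 : ℝ) ≤ (cfQ α n : ℝ) := fun n => by
    exact_mod_cast (cfQ_ge_one α hα h0 h1 n).1
  have hqpos : ∀ n, (0 : ℝ) < (cfQ α n : ℝ) := fun n => lt_of_lt_of_le one_pos (hqR n)
  have haR : ∀ n, (1 : ℝ) ≤ (cfA α n : ℝ) := fun n => by
    exact_mod_cast cfA_ge_one α hα h0 h1 n
  -- recurrence bound: a_{2m+2} q_{2m+2} ≤ q_{2m+3}
  have hrec : ∀ m : ℕ, (cfA α (2 * m + 2) : ℝ) * (cfQ α (2 * m + 2) : ℝ) ≤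
      (cfQ α (2 * m + 3) : ℝ) := by
    intro m
    have : cfQ α (2 * m + 3) = cfA α (2 * m + 2) * cfQ α (2 * m + 2) + cfQ α (2 * m + 1) := by
      show cfQ α (2 * m + 1 + 2) = _
      rfl
    rw [this]
    push_cast
    nlinarith [hqR (2 * m + 1)]
  -- the index map 2j-2 tends to infinity
  have hidx : Tendsto (fun j : ℕ => 2 * j - 2) atTop atTop :=
    tendsto_atTop_atTop.mpr fun b => ⟨b + 2, fun a hab => by omega⟩
  have haT : Tendsto (fun j : ℕ => (cfA α (2 * j - 2) : ℝ)) atTop atTop := ha.comp hidx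
  have hlim : Tendsto (fun j : ℕ => 100 / (cfA α (2 * j - 2) : ℝ)) atTop (nhds 0) :=
    Filter.Tendsto.div_atTop tendsto_const_nhds haT
  -- eventual bound
  have key : ∀ᶠ j in atTop, ‖(k j : ℝ) / (cfQ α (2 * j - 1) : ℝ) - η‖ ≤
      100 / (cfA α (2 * j - 2) : ℝ) := by
    rw [eventually_atTop]
    refine ⟨2, fun j hj => ?_⟩
    obtain ⟨m, rfl⟩ : ∃ m, j = m + 2 := ⟨j - 2, by omega⟩
    have e1 : 2 * (m + 2) - 1 = 2 * m + 3 := by omega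
    have e2 : 2 * (m + 2) - 2 = 2 * m + 2 := by omega
    rw [e1, e2]
    have hb := hkbound (m + 2) (by omega)
    rw [e1, e2] at hb
    set a := (cfA α (2 * m + 2) : ℝ) with ha'
    set q' := (cfQ α (2 * m + 2) : ℝ) with hq'
    set q := (cfQ α (2 * m + 3) : ℝ) with hq
    have hapos : 0 < a := lt_of_lt_of_le one_pos (haR _)
    have hq'pos : 0 < q' := hqpos _
    have hqpos' : 0 < q := hqpos _
    have haq : a * q' ≤ q := hrec m
    rw [Real.norm_eq_abs]
    have h1 : (k (m + 2) : ℝ) / q - η = ((k (m + 2) : ℝ) - η * q) / q := by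
      field_simp
    rw [h1, abs_div, abs_of_pos hqpos']
    have h2 : |(k (m + 2) : ℝ) - η * q| / q ≤ 100 * q' / q := by gcongr
    refine h2.trans ?_
    rw [div_le_div_iff₀ hqpos' hapos]
    nlinarith
  have part1 : Tendsto (fun j : ℕ => (k j : ℝ) / (cfQ α (2 * j - 1) : ℝ)) atTop (nhds η) :=
    tendsto_sub_nhds_zero_iff.mp (squeeze_zero_norm' key hlim)
  refine ⟨part1, ?_⟩
  -- Part 2
  set F : ℕ → ℝ := fun j => Real.log (cfQ α (2 * j)) / (cfQ α (2 * j - 1) : ℝ) with hF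
  set G : ℕ → ℝ := fun j => (cfQ α (2 * j - 1) : ℝ) / (k j : ℝ) with hG
  have hGten : Tendsto G atTop (nhds η⁻¹) := by
    have := part1.inv₀ hη0.ne'
    convert this using 1
    funext j
    simp [hG, inv_div]
  have hF0 : ∀ j, 0 ≤ F j := fun j =>
    div_nonneg (Real.log_nonneg (hqR _)) (hqpos _).le
  have hFbdd : IsBoundedUnder (· ≤ ·) atTop F := by
    by_contra hcon
    have hempty : {a : ℝ | ∀ᶠ j in atTop, F j ≤ a} = ∅ := by
      rw [Set.eq_empty_iff_forall_notMem]
      intro a ha'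
      exact hcon ⟨a, eventually_map.mpr ha'⟩
    have : Filter.limsup F atTop = 0 := by
      rw [Filter.limsup_eq, hempty, Real.sInf_empty]
    rw [hβeven] at this
    linarith
  have hG0 : ∀ᶠ j in atTop, 0 ≤ G j := by
    filter_upwards [part1.eventually_const_lt hη0] with j hj
    have hkpos : (0 : ℝ) < (k j : ℝ) := by
      by_contra hk
      push_neg at hk
      have : (k j : ℝ) / (cfQ α (2 * j - 1) : ℝ) ≤ 0 :=
        div_nonpos_of_nonpos_of_nonneg hk (hqpos _).le
      linarith
    exact div_nonneg (hqpos _).le hkpos.le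
  have hGbdd : IsBoundedUnder (· ≤ ·) atTop G := hGten.isBoundedUnder_le
  have hFG : (fun j : ℕ => Real.log (cfQ α (2 * j)) / (k j : ℝ)) = F * G := by
    funext j
    show Real.log (cfQ α (2 * j)) / (k j : ℝ) = _ / _ * (_ / _)
    rw [div_mul_div_comm, mul_comm (Real.log _),
      mul_div_mul_left _ _ (ne_of_gt (hqpos (2 * j - 1)))]
  have hup : Filter.limsup (F * G) atTop ≤ β * η⁻¹ := by
    have h := limsup_mul_le (Eventually.of_forall hF0).frequently hFbdd hG0 hGbdd
    rwa [hβeven, hGten.limsup_eq] at h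
  have hlo : β * η⁻¹ ≤ Filter.limsup (F * G) atTop := by
    have h := le_limsup_mul (Eventually.of_forall hF0).frequently hFbdd hG0 hGbdd
    rwa [hβeven, hGten.liminf_eq] at h
  rw [hδdef, hFG, div_eq_mul_inv]
  exact le_antisymm hup hlo
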